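/- The linear map C := I − T vanishes on N(A) and maps R(Aᵀ) into R(Aᵀ), and its restriction C|_{R(Aᵀ)} : R(Aᵀ) → R(Aᵀ) is a linear bijection (invertible). -/

import Mathlib

open scoped RealInnerProductSpace

noncomputable section

abbrev Euc (n : ℕ) := EuclideanSpace ℝ (Fin n)

/-- Intermediate Kaczmarz chain: `chainK Pj x j` is `y_j` with `y_0 = x`, `y_{j+1} = P_{j+1}(y_j)`. -/
def chainK {n p : ℕ} (Pj : Fin p → Euc n → Euc n) (x : Euc n) : ℕ → Euc n
  | 0 => x
  | j + 1 => if h : j < p then Pj ⟨j, h⟩ (chainK Pj x j) else chainK Pj x j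

/-- The block Kaczmarz operator `P = P_p ∘ ⋯ ∘ P_1`. -/
def kacz {n p : ℕ} (Pj : Fin p → Euc n → Euc n) (x : Euc n) : Euc n := chainK Pj x p

/-- `f` sends each point to the (unique) nearest point of `S`. -/
def IsNearestPointMap {n : ℕ} (S : Set (Euc n)) (f : Euc n → Euc n) : Prop :=
  ∀ x, f x ∈ S ∧ ∀ y ∈ S, dist x (f x) ≤ dist x y

/-- The stacked (full) matrix `A` with blocks `A_j`. -/
def fullA {n p : ℕ} (m : Fin p → ℕ)
    (A : ∀ j : Fin p, Euc n →ₗ[ℝ] Euc (m j)) :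
    Euc n →ₗ[ℝ] PiLp 2 (fun j => Euc (m j)) :=
  (WithLp.linearEquiv 2 ℝ (∀ j, Euc (m j))).symm.toLinearMap ∘ₗ LinearMap.pi A

/-- The range of `Aᵀ` for the stacked matrix. -/
def RAT {n p : ℕ} (m : Fin p → ℕ)
    (A : ∀ j : Fin p, Euc n →ₗ[ℝ] Euc (m j)) : Submodule ℝ (Euc n) :=
  LinearMap.range (LinearMap.adjoint (fullA m A))

/-- Orthogonal projection onto a subspace, as an endomorphism. -/
def projSub {n : ℕ} (K : Submodule ℝ (Euc n)) : Euc n →ₗ[ℝ] Euc n :=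
  K.subtype ∘ₗ (K.orthogonalProjectionOnto).toLinearMap

/-- `Tchain m A j = Q_j ∘ ⋯ ∘ Q_1`, with `Q_i` the orthogonal projection onto `N(A_i)`. -/
def Tchain {n p : ℕ} (m : Fin p → ℕ)
    (A : ∀ j : Fin p, Euc n →ₗ[ℝ] Euc (m j)) :
    ℕ → (Euc n →ₗ[ℝ] Euc n)
  | 0 => LinearMap.id
  | j + 1 => if h : j < p then projSub (LinearMap.ker (A ⟨j, h⟩)) ∘ₗ Tchain m A j
             else Tchain m A j

/-- `T = Q_p ∘ ⋯ ∘ Q_1`. -/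
def Tmap {n p : ℕ} (m : Fin p → ℕ)
    (A : ∀ j : Fin p, Euc n →ₗ[ℝ] Euc (m j)) : Euc n →ₗ[ℝ] Euc n :=
  Tchain m A p

/-- `C = I - T`. -/
def Cmap {n p : ℕ} (m : Fin p → ℕ)
    (A : ∀ j : Fin p, Euc n →ₗ[ℝ] Euc (m j)) : Euc n →ₗ[ℝ] Euc n :=
  LinearMap.id - Tmap m A

/-- The Krylov space `K_k(C, r) = span(r, Cr, …, C^{k-1} r)`. -/
def krylov {n : ℕ} (C : Euc n →ₗ[ℝ] Euc n) (r : Euc n) (k : ℕ) : Submodule ℝ (Euc n) :=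
  Submodule.span ℝ {v | ∃ i < k, v = (C ^ i) r}

/-- `z` is the unique minimizer of `‖x - xs‖²` over `S`. -/
def IsUniqueMinimizer {n : ℕ} (xs : Euc n) (S : Set (Euc n)) (z : Euc n) : Prop :=
  z ∈ S ∧ ∀ y ∈ S, y ≠ z → ‖z - xs‖ ^ 2 < ‖y - xs‖ ^ 2

/-- The affine Krylov space `x₀ + K_k(C, r)` as a set. -/
def affKrylov {n : ℕ} (x0 : Euc n) (C : Euc n →ₗ[ℝ] Euc n) (r : Euc n) (k : ℕ) :
    Set (Euc n) :=
  (fun v => x0 + v) '' (krylov C r k : Set (Euc n))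

/- ### Auxiliary lemmas -/

lemma projSub_mem {n : ℕ} (K : Submodule ℝ (Euc n)) (x : Euc n) : projSub K x ∈ K :=
  (K.orthogonalProjectionOnto x).2

lemma projSub_of_mem {n : ℕ} (K : Submodule ℝ (Euc n)) {x : Euc n} (hx : x ∈ K) :
    projSub K x = x := Submodule.starProjection_eq_self_iff.mpr hx

lemma projSub_pyth {n : ℕ} (K : Submodule ℝ (Euc n)) (x : Euc n) :
    ‖x‖ ^ 2 = ‖projSub K x‖ ^ 2 + ‖x - projSub K x‖ ^ 2 := by
  have h : ⟪projSub K x, x - projSub K x⟫ = 0 := by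
    rw [real_inner_comm]
    exact K.starProjection_inner_eq_zero x _ (projSub_mem K x)
  have h2 := norm_add_sq_real (projSub K x) (x - projSub K x)
  rw [h] at h2
  have h3 : projSub K x + (x - projSub K x) = x := by abel
  rw [h3] at h2
  linarith

lemma projSub_norm_le {n : ℕ} (K : Submodule ℝ (Euc n)) (x : Euc n) :
    ‖projSub K x‖ ≤ ‖x‖ := by
  have := projSub_pyth K x
  nlinarith [norm_nonneg (x - projSub K x), norm_nonneg (projSub K x), norm_nonneg x]

lemma projSub_eq_of_norm {n : ℕ} (K : Submodule ℝ (Euc n)) {x : Euc n}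
    (hx : ‖projSub K x‖ = ‖x‖) : projSub K x = x := by
  have h := projSub_pyth K x
  rw [hx] at h
  have h0 : ‖x - projSub K x‖ = 0 := by nlinarith [norm_nonneg (x - projSub K x)]
  have := sub_eq_zero.mp (norm_eq_zero.mp h0)
  exact this.symm

lemma projSub_inner {n : ℕ} (K : Submodule ℝ (Euc n)) (u v : Euc n) :
    ⟪projSub K u, v⟫ = ⟪u, projSub K v⟫ :=
  K.inner_starProjection_left_eq_right u v

lemma mem_ker_fullA_iff {n p : ℕ} (m : Fin p → ℕ)
    (A : ∀ j : Fin p, Euc n →ₗ[ℝ] Euc (m j)) (x : Euc n) :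
    x ∈ LinearMap.ker (fullA m A) ↔ ∀ j, A j x = 0 := by
  simp [fullA, LinearMap.mem_ker, LinearEquiv.map_eq_zero_iff, LinearMap.pi_apply,
    funext_iff]

lemma Tchain_norm_le {n p : ℕ} (m : Fin p → ℕ)
    (A : ∀ j : Fin p, Euc n →ₗ[ℝ] Euc (m j)) (x : Euc n) :
    ∀ k, ‖Tchain m A k x‖ ≤ ‖x‖ := by
  intro k
  induction k with
  | zero => simp [Tchain]
  | succ j ih =>
      by_cases h : j < p
      · simp only [Tchain, dif_pos h, LinearMap.comp_apply]
        exact (projSub_norm_le _ _).trans ih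
      · simpa only [Tchain, dif_neg h] using ih

lemma Tchain_fixes {n p : ℕ} (m : Fin p → ℕ)
    (A : ∀ j : Fin p, Euc n →ₗ[ℝ] Euc (m j)) {x : Euc n}
    (hx : x ∈ LinearMap.ker (fullA m A)) :
    ∀ k, Tchain m A k x = x := by
  intro k
  induction k with
  | zero => simp [Tchain]
  | succ j ih =>
      by_cases h : j < p
      · simp only [Tchain, dif_pos h, LinearMap.comp_apply, ih]
        exact projSub_of_mem _ ((mem_ker_fullA_iff m A x).mp hx ⟨j, h⟩)
      · simpa only [Tchain, dif_neg h] using ih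

lemma Tchain_inner_ker {n p : ℕ} (m : Fin p → ℕ)
    (A : ∀ j : Fin p, Euc n →ₗ[ℝ] Euc (m j)) (x : Euc n) {z : Euc n}
    (hz : z ∈ LinearMap.ker (fullA m A)) :
    ∀ k, ⟪Tchain m A k x, z⟫ = ⟪x, z⟫ := by
  intro k
  induction k with
  | zero => simp [Tchain]
  | succ j ih =>
      by_cases h : j < p
      · simp only [Tchain, dif_pos h, LinearMap.comp_apply]
        rw [projSub_inner, projSub_of_mem _ ((mem_ker_fullA_iff m A z).mp hz ⟨j, h⟩)]
        exact ih
      · simpa only [Tchain, dif_neg h] using ih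

lemma Tchain_fix_step {n p : ℕ} (m : Fin p → ℕ)
    (A : ∀ j : Fin p, Euc n →ₗ[ℝ] Euc (m j)) {x : Euc n} (k : ℕ)
    (hk : Tchain m A (k + 1) x = x) :
    Tchain m A k x = x ∧ ∀ h : k < p, A ⟨k, h⟩ x = 0 := by
  by_cases h : k < p
  · simp only [Tchain, dif_pos h, LinearMap.comp_apply] at hk
    set K := LinearMap.ker (A ⟨k, h⟩)
    have hfix : Tchain m A k x = x := by
      have hle : ‖Tchain m A k x‖ ≤ ‖x‖ := Tchain_norm_le m A x k
      have h1 : ‖projSub K (Tchain m A k x)‖ = ‖x‖ := by rw [hk]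
      have heq : ‖projSub K (Tchain m A k x)‖ = ‖Tchain m A k x‖ :=
        le_antisymm (projSub_norm_le _ _) (by rw [h1]; exact hle)
      have := projSub_eq_of_norm K heq
      rw [this] at hk
      exact hk
    refine ⟨hfix, fun h' => ?_⟩
    rw [hfix] at hk
    have hxK : x ∈ K := hk ▸ projSub_mem K x
    exact hxK
  · simp only [Tchain, dif_neg h] at hk
    exact ⟨hk, fun h' => absurd h' h⟩

lemma Tchain_fix_ker {n p : ℕ} (m : Fin p → ℕ)
    (A : ∀ j : Fin p, Euc n →ₗ[ℝ] Euc (m j)) {x : Euc n} :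
    ∀ k, Tchain m A k x = x → ∀ j, ∀ h : j < p, j < k → A ⟨j, h⟩ x = 0 := by
  intro k
  induction k with
  | zero => intro _ j h hj; omega
  | succ i ih =>
      intro hk j h hj
      obtain ⟨h1, h2⟩ := Tchain_fix_step m A i hk
      rcases Nat.lt_succ_iff_lt_or_eq.mp hj with hji | rfl
      · exact ih h1 j h hji
      · exact h2 h

lemma ker_eq_RAT_orth {n p : ℕ} (m : Fin p → ℕ)
    (A : ∀ j : Fin p, Euc n →ₗ[ℝ] Euc (m j)) :
    LinearMap.ker (fullA m A) = (RAT m A)ᗮ := by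
  ext x
  constructor
  · intro hx
    rw [Submodule.mem_orthogonal]
    rintro u ⟨y, rfl⟩
    rw [LinearMap.adjoint_inner_left, LinearMap.mem_ker.mp hx, inner_zero_right]
  · intro hx
    rw [LinearMap.mem_ker, ← inner_self_eq_zero (𝕜 := ℝ)]
    rw [← LinearMap.adjoint_inner_left]
    exact (Submodule.mem_orthogonal (RAT m A) x).mp hx _ ⟨fullA m A x, rfl⟩

lemma RAT_eq_ker_orth {n p : ℕ} (m : Fin p → ℕ)
    (A : ∀ j : Fin p, Euc n →ₗ[ℝ] Euc (m j)) :
    RAT m A = (LinearMap.ker (fullA m A))ᗮ := by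
  rw [ker_eq_RAT_orth, Submodule.orthogonal_orthogonal]

theorem stmt9
    {n p : ℕ} (msz : Fin p → ℕ)
    (A : ∀ j : Fin p, Euc n →ₗ[ℝ] Euc (msz j)) :
    (∀ x ∈ LinearMap.ker (fullA msz A), Cmap msz A x = 0) ∧
    ∃ h : ∀ x ∈ RAT msz A, Cmap msz A x ∈ RAT msz A,
      Function.Bijective ((Cmap msz A).restrict h) := by
  have hker : ∀ x ∈ LinearMap.ker (fullA msz A), Cmap msz A x = 0 := by
    intro x hx
    simp [Cmap, Tmap, LinearMap.sub_apply, Tchain_fixes msz A hx p]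
  refine ⟨hker, ?_⟩
  have hC_mem : ∀ x, Cmap msz A x ∈ RAT msz A := by
    intro x
    rw [RAT_eq_ker_orth]
    rw [Submodule.mem_orthogonal]
    intro u hu
    simp only [Cmap, Tmap, LinearMap.sub_apply, LinearMap.id_apply]
    rw [inner_sub_right, real_inner_comm (Tchain msz A p x) u,
      Tchain_inner_ker msz A x hu p, real_inner_comm x u, sub_self]
  have hmap : ∀ x ∈ RAT msz A, Cmap msz A x ∈ RAT msz A := fun x _ => hC_mem x
  refine ⟨hmap, ?_⟩
  have hinj : Function.Injective ((Cmap msz A).restrict hmap) := by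
    rw [injective_iff_map_eq_zero]
    intro ⟨x, hx⟩ hx0
    have hCx : Cmap msz A x = 0 := by
      have := congrArg Subtype.val hx0
      simpa [LinearMap.restrict_apply] using this
    have hTx : Tchain msz A p x = x := by
      have h0 : x - Tmap msz A x = 0 := by
        simpa [Cmap, LinearMap.sub_apply] using hCx
      exact (sub_eq_zero.mp h0).symm
    have hxker : x ∈ LinearMap.ker (fullA msz A) := by
      rw [mem_ker_fullA_iff]
      intro j
      have := Tchain_fix_ker msz A p hTx j.1 j.isLt j.isLt
      simpa using this
    have h0 : ⟪x, x⟫ = 0 :=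
      (Submodule.mem_orthogonal _ x).mp ((ker_eq_RAT_orth msz A) ▸ hxker) x hx
    exact Subtype.ext (inner_self_eq_zero.mp h0)
  exact ⟨hinj, (LinearMap.injective_iff_surjective).mp hinj⟩

end
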